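/- Under the hypotheses of Lemma (Lipschitz gradient of forward objective): if ‖Φ₁‖₂, ‖Φ₂‖₂ ≤ B, ‖YYᵀ‖₂ ≤ n_max, Π an orthogonal projection, and G(Φ) = (ΠΦΦᵀΠ + nλI)⁻¹, then ‖∇F_f(Φ₁) − ∇F_f(Φ₂)‖₂ ≤ (8B²n_max/(n³λ²) + 2n_max/(n²λ)) ‖Φ₁ − Φ₂‖₂, where ∇F_f(Φ) = −2λ Π G(Φ) Π YYᵀ Π G(Φ) Π Φ. -/

import Mathlib

open Matrix
open scoped Matrix.Norms.L2Operator RealInnerProductSpace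

noncomputable def specNorm {n D : ℕ} (A : Matrix (Fin n) (Fin D) ℝ) : ℝ :=
  ‖LinearMap.toContinuousLinearMap (Matrix.toEuclideanLin A)‖

lemma specNorm_eq_norm {n D : ℕ} (A : Matrix (Fin n) (Fin D) ℝ) : specNorm A = ‖A‖ := rfl

lemma nmul {p q r : ℕ} {A : Matrix (Fin p) (Fin q) ℝ} {B : Matrix (Fin q) (Fin r) ℝ}
    {a b : ℝ} (ha : ‖A‖ ≤ a) (hb : ‖B‖ ≤ b) (ha0 : 0 ≤ a) : ‖A * B‖ ≤ a * b :=
  le_trans (Matrix.l2_opNorm_mul A B) (mul_le_mul ha hb (norm_nonneg B) ha0)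

lemma l2NormT {p q : ℕ} (A : Matrix (Fin p) (Fin q) ℝ) : ‖Aᵀ‖ = ‖A‖ := by
  rw [← Matrix.conjTranspose_eq_transpose_of_trivial, Matrix.l2_opNorm_conjTranspose]

lemma norm_idem_le_one {n : ℕ} (P : Matrix (Fin n) (Fin n) ℝ)
    (hP2 : P * P = P) (hPT : Pᵀ = P) : ‖P‖ ≤ 1 := by
  have hH : Pᴴ = P := by rw [Matrix.conjTranspose_eq_transpose_of_trivial, hPT]
  have h : ‖P‖ * ‖P‖ = ‖P‖ := by
    rw [← Matrix.l2_opNorm_conjTranspose_mul_self P, hH, hP2]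
  nlinarith [norm_nonneg P]

lemma norm_shifted_inv_le {n : ℕ} (c : ℝ) (hc : 0 < c) (S : Matrix (Fin n) (Fin n) ℝ)
    (hS : S.PosSemidef) :
    ‖(S + c • (1 : Matrix (Fin n) (Fin n) ℝ))⁻¹‖ ≤ 1 / c := by
  set A := S + c • (1 : Matrix (Fin n) (Fin n) ℝ) with hA
  have hc1 : (c • (1 : Matrix (Fin n) (Fin n) ℝ)).PosDef := by
    rw [Matrix.smul_one_eq_diagonal]
    exact Matrix.posDef_diagonal_iff.mpr fun _ => hc
  have hApos : A.PosDef := Matrix.PosDef.posSemidef_add hS hc1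
  have hdet : IsUnit A.det := hApos.det_pos.ne'.isUnit
  have hAA : A * A⁻¹ = 1 := Matrix.mul_nonsing_inv A hdet
  rw [Matrix.l2_opNorm_def]
  refine ContinuousLinearMap.opNorm_le_bound _ (by positivity) fun x => ?_
  set x' : Fin n → ℝ := (WithLp.equiv 2 _) x with hx'
  set y' : Fin n → ℝ := A⁻¹ *ᵥ x' with hy'
  set yv : EuclideanSpace ℝ (Fin n) := (WithLp.equiv 2 _).symm y' with hyv
  have hgoal : (LinearEquiv.trans Matrix.toEuclideanLin
      LinearMap.toContinuousLinearMap A⁻¹) x = yv := rfl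
  rw [hgoal]
  have hAy : A *ᵥ y' = x' := by
    rw [hy', Matrix.mulVec_mulVec, hAA, Matrix.one_mulVec]
  have hinner : (inner ℝ yv x : ℝ) = y' ⬝ᵥ x' := by
    rw [EuclideanSpace.inner_eq_star_dotProduct]
    simp [hyv, hx', star_trivial, dotProduct_comm]
  have hdot : y' ⬝ᵥ x' = y' ⬝ᵥ (S *ᵥ y') + c * (y' ⬝ᵥ y') := by
    rw [← hAy, hA, Matrix.add_mulVec, dotProduct_add, Matrix.smul_mulVec,
      Matrix.one_mulVec, dotProduct_smul, smul_eq_mul]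
  have hSnn : 0 ≤ y' ⬝ᵥ (S *ᵥ y') := by
    have := hS.dotProduct_mulVec_nonneg y'
    simpa [star_trivial] using this
  have hyy : y' ⬝ᵥ y' = ‖yv‖ ^ 2 := by
    have : (inner ℝ yv yv : ℝ) = y' ⬝ᵥ y' := by
      rw [EuclideanSpace.inner_eq_star_dotProduct]; simp [hyv, star_trivial]
    rw [← this, real_inner_self_eq_norm_sq]
  have hCS : (inner ℝ yv x : ℝ) ≤ ‖yv‖ * ‖x‖ := real_inner_le_norm yv x
  have key : c * ‖yv‖ ^ 2 ≤ ‖yv‖ * ‖x‖ := by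
    calc c * ‖yv‖ ^ 2 ≤ y' ⬝ᵥ (S *ᵥ y') + c * (y' ⬝ᵥ y') := by rw [hyy]; linarith
    _ = (inner ℝ yv x : ℝ) := by rw [hinner, hdot]
    _ ≤ ‖yv‖ * ‖x‖ := hCS
  rcases (norm_nonneg yv).eq_or_lt with h0 | h0
  · rw [← h0]; positivity
  · have h1 : c * ‖yv‖ ≤ ‖x‖ := by
      have := mul_le_mul_of_nonneg_right key (le_of_lt (inv_pos.mpr h0))
      calc c * ‖yv‖ = c * ‖yv‖ ^ 2 * ‖yv‖⁻¹ := by field_simp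
      _ ≤ ‖yv‖ * ‖x‖ * ‖yv‖⁻¹ := this
      _ = ‖x‖ := by field_simp
    rw [div_mul_eq_mul_div, one_mul, le_div_iff₀ hc]
    linarith [h1]

set_option maxHeartbeats 1600000 in
theorem stmt_11 (n D k : ℕ) (hn : 0 < n) (lam B n_max : ℝ) (hlam : 0 < lam)
    (hB : 0 ≤ B) (hmax : 0 ≤ n_max)
    (P : Matrix (Fin n) (Fin n) ℝ) (hP2 : P * P = P) (hPT : Pᵀ = P)
    (Y : Matrix (Fin n) (Fin k) ℝ) (hY : specNorm (Y * Yᵀ) ≤ n_max)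
    (Φ₁ Φ₂ : Matrix (Fin n) (Fin D) ℝ)
    (hΦ₁ : specNorm Φ₁ ≤ B) (hΦ₂ : specNorm Φ₂ ≤ B)
    (G : Matrix (Fin n) (Fin D) ℝ → Matrix (Fin n) (Fin n) ℝ)
    (hG : ∀ Ψ, G Ψ = (P * Ψ * Ψᵀ * P + ((n : ℝ) * lam) • (1 : Matrix (Fin n) (Fin n) ℝ))⁻¹) :
    specNorm ((-(2 * lam)) • (P * G Φ₁ * P * (Y * Yᵀ) * P * G Φ₁ * P * Φ₁) -
        (-(2 * lam)) • (P * G Φ₂ * P * (Y * Yᵀ) * P * G Φ₂ * P * Φ₂))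
      ≤ (8 * B ^ 2 * n_max / ((n : ℝ) ^ 3 * lam ^ 2) + 2 * n_max / ((n : ℝ) ^ 2 * lam)) *
        specNorm (Φ₁ - Φ₂) := by
  simp only [specNorm_eq_norm] at hY hΦ₁ hΦ₂ ⊢
  have hn' : (0:ℝ) < (n:ℝ) := by exact_mod_cast hn
  have hcpos : (0:ℝ) < (n:ℝ) * lam := mul_pos hn' hlam
  have hn0 : ((n:ℝ)) ≠ 0 := hn'.ne'
  have hl0 : lam ≠ 0 := hlam.ne'
  set κ : ℝ := 1/((n:ℝ)*lam) with hκdef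
  have hκ0 : 0 ≤ κ := le_of_lt (by rw [hκdef]; positivity)
  set d : ℝ := ‖Φ₁ - Φ₂‖ with hddef
  have hd0 : 0 ≤ d := norm_nonneg _
  have hPn : ‖P‖ ≤ 1 := norm_idem_le_one P hP2 hPT
  have hPH : Pᴴ = P := by rw [Matrix.conjTranspose_eq_transpose_of_trivial, hPT]
  have hpsd : ∀ Ψ : Matrix (Fin n) (Fin D) ℝ, (P * Ψ * Ψᵀ * P).PosSemidef := by
    intro Ψ
    have h1 : P * Ψ * Ψᵀ * P = (P * Ψ) * (P * Ψ)ᴴ := by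
      rw [Matrix.conjTranspose_mul, hPH, Matrix.conjTranspose_eq_transpose_of_trivial,
        Matrix.mul_assoc]
    rw [h1]; exact Matrix.posSemidef_self_mul_conjTranspose _
  have hGnorm : ∀ Ψ, ‖G Ψ‖ ≤ κ := fun Ψ => by
    rw [hG Ψ, hκdef]; exact norm_shifted_inv_le _ hcpos _ (hpsd Ψ)
  have hG1 : ‖G Φ₁‖ ≤ κ := hGnorm Φ₁
  have hG2 : ‖G Φ₂‖ ≤ κ := hGnorm Φ₂
  have hpd : ∀ Ψ : Matrix (Fin n) (Fin D) ℝ,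
      (P * Ψ * Ψᵀ * P + ((n:ℝ)*lam) • (1 : Matrix (Fin n) (Fin n) ℝ)).PosDef := fun Ψ =>
    Matrix.PosDef.posSemidef_add (hpsd Ψ) (by
      rw [Matrix.smul_one_eq_diagonal]
      exact Matrix.posDef_diagonal_iff.mpr fun _ => hcpos)
  have h1 : G Φ₁ * (P * Φ₁ * Φ₁ᵀ * P + ((n:ℝ)*lam) • (1 : Matrix (Fin n) (Fin n) ℝ)) = 1 := by
    rw [hG]; exact Matrix.nonsing_inv_mul _ (hpd Φ₁).det_pos.ne'.isUnit
  have h2 : (P * Φ₂ * Φ₂ᵀ * P + ((n:ℝ)*lam) • (1 : Matrix (Fin n) (Fin n) ℝ)) * G Φ₂ = 1 := by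
    rw [hG]; exact Matrix.mul_nonsing_inv _ (hpd Φ₂).det_pos.ne'.isUnit
  set M := Φ₂ * (Φ₂ - Φ₁)ᵀ + (Φ₂ - Φ₁) * Φ₁ᵀ with hMdef
  have hres : G Φ₁ - G Φ₂ = G Φ₁ * (P * M * P) * G Φ₂ := by
    have hA : P * M * P =
        (P * Φ₂ * Φ₂ᵀ * P + ((n:ℝ)*lam) • (1 : Matrix (Fin n) (Fin n) ℝ)) -
        (P * Φ₁ * Φ₁ᵀ * P + ((n:ℝ)*lam) • (1 : Matrix (Fin n) (Fin n) ℝ)) := by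
      rw [hMdef, add_sub_add_right_eq_sub]
      simp only [Matrix.transpose_sub, Matrix.mul_sub, Matrix.sub_mul, Matrix.mul_add,
        Matrix.add_mul, Matrix.mul_assoc]
      abel
    have hgen : ∀ (X Z W : Matrix (Fin n) (Fin n) ℝ), X * Z = 1 → W * G Φ₂ = 1 →
        X - G Φ₂ = X * (W - Z) * G Φ₂ := by
      intro X Z W e1 e2
      calc X - G Φ₂ = X * (W * G Φ₂) - (X * Z) * G Φ₂ := by rw [e1, e2, mul_one, one_mul]
        _ = X * (W - Z) * G Φ₂ := by noncomm_ring
    have := hgen (G Φ₁) _ _ h1 h2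
    rw [← hA] at this
    exact this
  have hMn : ‖M‖ ≤ 2*B*d := by
    have t1 : ‖(Φ₂ - Φ₁)ᵀ‖ = d := by rw [l2NormT, norm_sub_rev]
    have t2 : ‖Φ₁ᵀ‖ ≤ B := by rw [l2NormT]; exact hΦ₁
    have t3 : ‖Φ₂ - Φ₁‖ = d := norm_sub_rev _ _
    calc ‖M‖ ≤ ‖Φ₂ * (Φ₂ - Φ₁)ᵀ‖ + ‖(Φ₂ - Φ₁) * Φ₁ᵀ‖ := hMdef ▸ norm_add_le _ _
      _ ≤ B * d + d * B := add_le_add (nmul hΦ₂ (le_of_eq t1) hB) (nmul (le_of_eq t3) t2 hd0)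
      _ = 2*B*d := by ring
  have h2Bd : 0 ≤ 2*B*d := mul_nonneg (mul_nonneg (by norm_num) hB) hd0
  have hGd : ‖G Φ₁ - G Φ₂‖ ≤ 2*B*d*κ^2 := by
    rw [hres]
    have i1 : ‖P * M‖ ≤ 1 * (2*B*d) := nmul hPn hMn zero_le_one
    have i2 : ‖P * M * P‖ ≤ 1 * (2*B*d) * 1 :=
      nmul i1 hPn (mul_nonneg zero_le_one h2Bd)
    have i3 : ‖G Φ₁ * (P * M * P)‖ ≤ κ * (1 * (2*B*d) * 1) := nmul hG1 i2 hκ0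
    have i4 : ‖G Φ₁ * (P * M * P) * G Φ₂‖ ≤ κ * (1 * (2*B*d) * 1) * κ :=
      nmul i3 hG2 (mul_nonneg hκ0 (by nlinarith))
    calc ‖G Φ₁ * (P * M * P) * G Φ₂‖ ≤ κ * (1 * (2*B*d) * 1) * κ := i4
      _ = 2*B*d*κ^2 := by ring
  have hdec : P * G Φ₁ * P * (Y * Yᵀ) * P * G Φ₁ * P * Φ₁ -
      P * G Φ₂ * P * (Y * Yᵀ) * P * G Φ₂ * P * Φ₂ =
      P * (G Φ₁ - G Φ₂) * P * (Y * Yᵀ) * P * G Φ₁ * P * Φ₁ +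
      P * G Φ₂ * P * (Y * Yᵀ) * P * (G Φ₁ - G Φ₂) * P * Φ₁ +
      P * G Φ₂ * P * (Y * Yᵀ) * P * G Φ₂ * P * (Φ₁ - Φ₂) := by
    simp only [Matrix.mul_sub, Matrix.sub_mul, Matrix.mul_add, Matrix.add_mul, Matrix.mul_assoc]
    abel
  have hT1 : ‖P * (G Φ₁ - G Φ₂) * P * (Y * Yᵀ) * P * G Φ₁ * P * Φ₁‖ ≤
      1*(2*B*d*κ^2)*1*n_max*1*κ*1*B := by
    have s1 : ‖P * (G Φ₁ - G Φ₂) * P * (Y * Yᵀ) * P * G Φ₁ * P * Φ₁‖ ≤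
        ‖P‖*‖G Φ₁ - G Φ₂‖*‖P‖*‖Y * Yᵀ‖*‖P‖*‖G Φ₁‖*‖P‖*‖Φ₁‖ :=
      nmul (nmul (nmul (nmul (nmul (nmul (nmul le_rfl le_rfl (norm_nonneg _)) le_rfl
        (by positivity)) le_rfl (by positivity)) le_rfl (by positivity)) le_rfl
        (by positivity)) le_rfl (by positivity)) le_rfl (by positivity)
    refine s1.trans ?_
    gcongr
  have hT2 : ‖P * G Φ₂ * P * (Y * Yᵀ) * P * (G Φ₁ - G Φ₂) * P * Φ₁‖ ≤
      1*κ*1*n_max*1*(2*B*d*κ^2)*1*B := by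
    have s1 : ‖P * G Φ₂ * P * (Y * Yᵀ) * P * (G Φ₁ - G Φ₂) * P * Φ₁‖ ≤
        ‖P‖*‖G Φ₂‖*‖P‖*‖Y * Yᵀ‖*‖P‖*‖G Φ₁ - G Φ₂‖*‖P‖*‖Φ₁‖ :=
      nmul (nmul (nmul (nmul (nmul (nmul (nmul le_rfl le_rfl (norm_nonneg _)) le_rfl
        (by positivity)) le_rfl (by positivity)) le_rfl (by positivity)) le_rfl
        (by positivity)) le_rfl (by positivity)) le_rfl (by positivity)
    refine s1.trans ?_
    gcongr
  have hT3 : ‖P * G Φ₂ * P * (Y * Yᵀ) * P * G Φ₂ * P * (Φ₁ - Φ₂)‖ ≤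
      1*κ*1*n_max*1*κ*1*d := by
    have s1 : ‖P * G Φ₂ * P * (Y * Yᵀ) * P * G Φ₂ * P * (Φ₁ - Φ₂)‖ ≤
        ‖P‖*‖G Φ₂‖*‖P‖*‖Y * Yᵀ‖*‖P‖*‖G Φ₂‖*‖P‖*‖Φ₁ - Φ₂‖ :=
      nmul (nmul (nmul (nmul (nmul (nmul (nmul le_rfl le_rfl (norm_nonneg _)) le_rfl
        (by positivity)) le_rfl (by positivity)) le_rfl (by positivity)) le_rfl
        (by positivity)) le_rfl (by positivity)) le_rfl (by positivity)
    refine s1.trans ?_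
    gcongr
  calc ‖(-(2 * lam)) • (P * G Φ₁ * P * (Y * Yᵀ) * P * G Φ₁ * P * Φ₁) -
        (-(2 * lam)) • (P * G Φ₂ * P * (Y * Yᵀ) * P * G Φ₂ * P * Φ₂)‖
      = 2 * lam * ‖P * G Φ₁ * P * (Y * Yᵀ) * P * G Φ₁ * P * Φ₁ -
        P * G Φ₂ * P * (Y * Yᵀ) * P * G Φ₂ * P * Φ₂‖ := by
        rw [← smul_sub, norm_smul, Real.norm_eq_abs, abs_neg, abs_of_pos (by linarith)]
    _ ≤ 2 * lam * (1*(2*B*d*κ^2)*1*n_max*1*κ*1*B + 1*κ*1*n_max*1*(2*B*d*κ^2)*1*B +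
        1*κ*1*n_max*1*κ*1*d) := by
        refine mul_le_mul_of_nonneg_left ?_ (by linarith)
        rw [hdec]
        exact (norm_add₃_le).trans (add_le_add (add_le_add hT1 hT2) hT3)
    _ = (8 * B ^ 2 * n_max / ((n : ℝ) ^ 3 * lam ^ 2) + 2 * n_max / ((n : ℝ) ^ 2 * lam)) * d := by
        rw [hκdef]
        field_simp
        ring
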